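/- arXiv:0911.4351 — 2 statements merged into one kernel-verified Lean document; each statement's English description precedes it below -/
import Mathlib

section
/- There exists an integer d₀ > 0 such that for every integer d₀ ≤ d ≤ 2n−1, if G is a d-regular graph on 2n vertices, then there exists a subset U of n+1 vertices such that the induced subgraph G[U] has maximum degree at most d/2 + 2√(d·ln d) + 2. -/
open SimpleGraph Real
open scoped Classical

variable {V : Type*}

noncomputable def degN (H : SimpleGraph V) (v : V) : ℕ := (H.neighborSet v).ncard

noncomputable def maxDeg (H : SimpleGraph V) : ℕ := sSup (Set.range (degN H))

noncomputable def minDeg (H : SimpleGraph V) : ℕ := sInf (Set.range (degN H))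

noncomputable def localResilience [Fintype V] (G : SimpleGraph V)
    (P : SimpleGraph V → Prop) : ℕ :=
  sInf {r | ∃ H ≤ G, maxDeg H = r ∧ ¬ P (G \ H)}

def EdgeConnK [Fintype V] (G : SimpleGraph V) (k : ℕ) : Prop :=
  ∀ s : Finset (Sym2 V), s.card < k → (G.deleteEdges ↑s).Connected

def VertConnK [Fintype V] (G : SimpleGraph V) (k : ℕ) : Prop :=
  ∀ S : Finset V, S.card < k → (G.induce ((↑S : Set V)ᶜ)).Connected

def IsReg (G : SimpleGraph V) (d : ℕ) : Prop := ∀ v, degN G v = d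

noncomputable def quadForm [Fintype V] (G : SimpleGraph V) (x : V → ℝ) : ℝ :=
  ∑ u, ∑ v, if G.Adj u v then x u * x v else 0

/-- `(n,d,lam)`-graph: `d`-regular and all eigenvalues of the adjacency matrix other
than the top one (i.e. on the orthogonal complement of the all-ones vector) are at
most `lam` in absolute value. -/
def IsNDL [Fintype V] (G : SimpleGraph V) (d : ℕ) (lam : ℝ) : Prop :=
  IsReg G d ∧ ∀ x : V → ℝ, (∑ v, x v) = 0 → |quadForm G x| ≤ lam * ∑ v, (x v) ^ 2

noncomputable def edgesWithin (G : SimpleGraph V) (U : Set V) : ℕ :=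
  {e ∈ G.edgeSet | ∀ v ∈ e, v ∈ U}.ncard

noncomputable def edgesBetween (G : SimpleGraph V) (U W : Set V) : ℕ :=
  {p : V × V | p.1 ∈ U ∧ p.2 ∈ W ∧ G.Adj p.1 p.2}.ncard

def nbhd (G : SimpleGraph V) (S : Set V) : Set V :=
  {v | v ∉ S ∧ ∃ u ∈ S, G.Adj u v}

noncomputable def maxPathLength (G : SimpleGraph V) : ℕ :=
  sSup {n | ∃ (u v : V) (p : G.Walk u v), p.IsPath ∧ p.length = n}

def Booster [Fintype V] (G : SimpleGraph V) (u v : V) : Prop :=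
  u ≠ v ∧ ¬ G.Adj u v ∧
    ((G ⊔ fromEdgeSet {s(u, v)}).IsHamiltonian ∨
      maxPathLength G < maxPathLength (G ⊔ fromEdgeSet {s(u, v)}))

def BSet [Fintype V] (G : SimpleGraph V) (v : V) : Set V := {w | Booster G v w}

def boosterSet [Fintype V] (G : SimpleGraph V) : Set (Sym2 V) :=
  {e | ∃ u v, e = s(u, v) ∧ Booster G u v}

def IsExpander [Fintype V] (G : SimpleGraph V) (ε : ℝ) : Prop :=
  (∀ S : Set V, (S.ncard : ℝ) < ε * (Fintype.card V) →
      10 * S.ncard ≤ (nbhd G S).ncard) ∧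
  (∀ S : Set V, ε * (Fintype.card V) ≤ (S.ncard : ℝ) →
      (S.ncard : ℝ) ≤ 2 * ε * (Fintype.card V) →
      (1 + 12 * ε) * (Fintype.card V) / 2 ≤ ((nbhd G S).ncard : ℝ))

def IsMagnifier (G : SimpleGraph V) (k ℓ : ℝ) : Prop :=
  ∀ U : Set V, (U.ncard : ℝ) ≤ k → ℓ * U.ncard ≤ ((nbhd G U).ncard : ℝ)

def QuasiRandom [Fintype V] (G : SimpleGraph V) (d : ℕ) (ε : ℝ) : Prop :=
  ((d : ℝ) / 2 ≤ (minDeg G : ℝ) ∧ (maxDeg G : ℝ) ≤ 2 * d) ∧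
  (∀ U : Set V, (U.ncard : ℝ) < ε ^ 3 * (Fintype.card V) / 14 →
      (edgesWithin G U : ℝ) ≤ ε ^ 3 * d * U.ncard / 14) ∧
  (∀ U W : Set V, Disjoint U W →
      ε ^ 3 / 160 * (Fintype.card V) ≤ (U.ncard : ℝ) →
      (U.ncard : ℝ) < 2 * (ε ^ 3 / 160) * (Fintype.card V) →
      (Fintype.card V : ℝ) / 2 * (1 - ε / 2 - 4 * (ε ^ 3 / 160)) ≤ (W.ncard : ℝ) →
      (d : ℝ) * (1 - ε / 4) / (Fintype.card V) * (U.ncard * W.ncard)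
          - (1 - ε) * (d : ℝ) / 2 * U.ncard ≤ (edgesBetween G U W : ℝ))

def bipartiteBetween (G : SimpleGraph V) (S : Set V) : SimpleGraph V where
  Adj u v := G.Adj u v ∧ ((u ∈ S ∧ v ∉ S) ∨ (u ∉ S ∧ v ∈ S))
  symm := by
    constructor
    intro u v h
    exact ⟨h.1.symm, h.2.elim (fun hh => Or.inr ⟨hh.2, hh.1⟩) (fun hh => Or.inl ⟨hh.2, hh.1⟩)⟩
  loopless := by
    constructor
    intro v h
    exact G.loopless.irrefl v h.1

def LegalStrategy [Fintype V] (G : SimpleGraph V)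
    (σ : Finset (Sym2 V) × Finset (Sym2 V) → Sym2 V) : Prop :=
  ∀ s : Finset (Sym2 V) × Finset (Sym2 V),
    (∃ e ∈ G.edgeSet, e ∉ s.1 ∧ e ∉ s.2) →
    σ s ∈ G.edgeSet ∧ σ s ∉ s.1 ∧ σ s ∉ s.2

def playMB [DecidableEq V]
    (σ τ : Finset (Sym2 V) × Finset (Sym2 V) → Sym2 V) :
    ℕ → Finset (Sym2 V) × Finset (Sym2 V)
  | 0 => (∅, ∅)
  | n + 1 =>
      let p := playMB σ τ n
      let q : Finset (Sym2 V) × Finset (Sym2 V) := (p.1, insert (τ p) p.2)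
      (insert (σ q) q.1, q.2)



/- ========= auxiliary development: counting probability tools ========= -/
section ProbTools
open Finset Real

variable {ι : Type*} [Fintype ι] [DecidableEq ι]

/-- A finset of the Boolean cube is determined by the coordinates in `I`. -/
def DetBy (A : Finset (ι → Bool)) (I : Finset ι) : Prop :=
  ∀ σ τ : ι → Bool, (∀ i ∈ I, σ i = τ i) → σ ∈ A → τ ∈ A

lemma detBy_indep (A B : Finset (ι → Bool)) (I J : Finset ι)
    (hA : DetBy A I) (hB : DetBy B J) (hIJ : Disjoint I J) :
    A.card * B.card = (A ∩ B).card * 2 ^ (Fintype.card ι) := by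
  classical
  have key : (A ×ˢ B).card = ((A ∩ B) ×ˢ (Finset.univ : Finset (ι → Bool))).card := by
    refine Finset.card_bij' (i := fun p _ => ((fun i => if i ∈ I then p.1 i else p.2 i),
        (fun i => if i ∈ I then p.2 i else p.1 i)))
      (j := fun p _ => ((fun i => if i ∈ I then p.1 i else p.2 i),
        (fun i => if i ∈ I then p.2 i else p.1 i))) ?_ ?_ ?_ ?_
    · rintro ⟨σ, τ⟩ hp
      rw [Finset.mem_product] at hp
      rw [Finset.mem_product]
      refine ⟨Finset.mem_inter.2 ⟨?_, ?_⟩, Finset.mem_univ _⟩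
      · exact hA σ _ (fun i hi => by simp [hi]) hp.1
      · refine hB τ _ (fun i hi => ?_) hp.2
        have : i ∉ I := fun h => (Finset.disjoint_left.1 hIJ h) hi
        simp [this]
    · rintro ⟨ρ, ρ'⟩ hp
      rw [Finset.mem_product, Finset.mem_inter] at hp
      rw [Finset.mem_product]
      constructor
      · exact hA ρ _ (fun i hi => by simp [hi]) hp.1.1
      · refine hB ρ _ (fun i hi => ?_) hp.1.2
        have : i ∉ I := fun h => (Finset.disjoint_left.1 hIJ h) hi
        simp [this]
    · rintro ⟨σ, τ⟩ _
      refine Prod.ext ?_ ?_ <;> (funext i; dsimp; by_cases h : i ∈ I <;> simp [h])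
    · rintro ⟨ρ, ρ'⟩ _
      refine Prod.ext ?_ ?_ <;> (funext i; dsimp; by_cases h : i ∈ I <;> simp [h])
  rw [Finset.card_product, Finset.card_product, Finset.card_univ] at key
  rw [key]
  congr 1
  simp [Fintype.card_pi]


def flipPerm (j : ι) : Equiv.Perm (ι → Bool) :=
  Function.Involutive.toPerm (fun σ => Function.update σ j (!(σ j))) (by
    intro σ
    funext i
    by_cases h : i = j <;> simp [Function.update, h])

lemma flip_sum (j : ι) (g : (ι → Bool) → ℝ) :
    ∑ σ : ι → Bool, g σ = ∑ σ : ι → Bool, g (Function.update σ j (!(σ j))) :=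
  (Equiv.sum_comp (flipPerm j) g).symm

lemma sum_prod_bool (S : Finset ι) (F : ι → Bool → ℝ) :
    ∑ σ : ι → Bool, ∏ i ∈ S, F i (σ i)
      = (∏ i ∈ S, (F i true + F i false) / 2) * 2 ^ (Fintype.card ι) := by
  classical
  induction S using Finset.cons_induction with
  | empty => simp [Fintype.card_pi]
  | cons j S hj ih =>
    have hP : ∀ σ : ι → Bool, ∏ i ∈ S, F i (Function.update σ j (!(σ j)) i) = ∏ i ∈ S, F i (σ i) := by
      intro σ
      apply Finset.prod_congr rfl
      intro i hi
      have : i ≠ j := fun h => hj (h ▸ hi)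
      simp [Function.update, this]
    have h2 : (2:ℝ) * ∑ σ : ι → Bool, ∏ i ∈ Finset.cons j S hj, F i (σ i)
        = (F j true + F j false) * ∑ σ : ι → Bool, ∏ i ∈ S, F i (σ i) := by
      rw [two_mul]
      nth_rewrite 2 [flip_sum j]
      rw [← Finset.sum_add_distrib, Finset.mul_sum]
      apply Finset.sum_congr rfl
      intro σ _
      rw [Finset.prod_cons, Finset.prod_cons, hP, ← add_mul]
      congr 1
      have hupd : Function.update σ j (!(σ j)) j = !(σ j) := by simp
      rw [hupd]
      cases h : σ j <;> simp [add_comm]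
    rw [ih] at h2
    have h3 : ∑ σ : ι → Bool, ∏ i ∈ Finset.cons j S hj, F i (σ i)
        = (F j true + F j false) * ((∏ i ∈ S, (F i true + F i false) / 2) * 2 ^ Fintype.card ι) / 2 := by
      linarith
    rw [h3, Finset.prod_cons]
    ring


lemma count_dev_one (S : Finset ι) (c : ι → Bool) (t m : ℝ) (ht : 0 < t) (hm0 : 0 < m)
    (hm : (S.card : ℝ) ≤ m) :
    ((Finset.univ.filter fun σ : ι → Bool =>
        t ≤ (∑ i ∈ S, if σ i = c i then (1:ℝ) else 0) - S.card / 2).card : ℝ)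
      ≤ Real.exp (-2 * t^2 / m) * 2 ^ (Fintype.card ι) := by
  classical
  set L : ℝ := 4 * t / m with hL
  have hLpos : 0 < L := by positivity
  set h : (ι → Bool) → ℝ := fun σ =>
    (∑ i ∈ S, if σ i = c i then (1:ℝ) else 0) - S.card / 2 with hh
  have hsum : ∀ σ, h σ = ∑ i ∈ S, ((if σ i = c i then (1:ℝ) else 0) - 1/2) := by
    intro σ
    rw [Finset.sum_sub_distrib]
    simp [hh]
    ring
  have mgf : ∑ σ : ι → Bool, Real.exp (L * h σ)
      ≤ Real.exp (m * L^2 / 8) * 2 ^ (Fintype.card ι) := by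
    have e1 : ∀ σ, Real.exp (L * h σ)
        = ∏ i ∈ S, Real.exp (L * ((if σ i = c i then (1:ℝ) else 0) - 1/2)) := by
      intro σ
      rw [← Real.exp_sum, ← Finset.mul_sum, ← hsum]
    simp_rw [e1]
    rw [sum_prod_bool S (fun i b => Real.exp (L * ((if b = c i then (1:ℝ) else 0) - 1/2)))]
    have hcosh : ∀ i : ι, (Real.exp (L * ((if true = c i then (1:ℝ) else 0) - 1/2))
        + Real.exp (L * ((if false = c i then (1:ℝ) else 0) - 1/2))) / 2
        ≤ Real.exp (L^2 / 8) := by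
      intro i
      have : (Real.exp (L * ((if true = c i then (1:ℝ) else 0) - 1/2))
          + Real.exp (L * ((if false = c i then (1:ℝ) else 0) - 1/2))) / 2 = Real.cosh (L/2) := by
        rw [Real.cosh_eq]
        cases hc : c i <;> simp <;> ring_nf
      rw [this]
      calc Real.cosh (L/2) ≤ Real.exp ((L/2)^2/2) := Real.cosh_le_exp_half_sq _
        _ = Real.exp (L^2/8) := by ring_nf
    have hprod : ∏ i ∈ S, (Real.exp (L * ((if true = c i then (1:ℝ) else 0) - 1/2))
        + Real.exp (L * ((if false = c i then (1:ℝ) else 0) - 1/2))) / 2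
        ≤ Real.exp (L^2/8) ^ S.card := by
      rw [← Finset.prod_const]
      apply Finset.prod_le_prod
      · intro i _; positivity
      · intro i _; exact hcosh i
    have hpow : Real.exp (L^2/8) ^ S.card ≤ Real.exp (m * L^2/8) := by
      rw [← Real.exp_nat_mul]
      apply Real.exp_le_exp.2
      have hL2 : 0 ≤ L^2/8 := by positivity
      nlinarith
    have h2N : (0:ℝ) ≤ 2 ^ (Fintype.card ι) := by positivity
    calc (∏ i ∈ S, (Real.exp (L * ((if true = c i then (1:ℝ) else 0) - 1/2))
          + Real.exp (L * ((if false = c i then (1:ℝ) else 0) - 1/2))) / 2) * 2 ^ (Fintype.card ι)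
        ≤ Real.exp (L^2/8) ^ S.card * 2 ^ (Fintype.card ι) := by
          apply mul_le_mul_of_nonneg_right hprod h2N
      _ ≤ Real.exp (m * L^2/8) * 2 ^ (Fintype.card ι) := by
          apply mul_le_mul_of_nonneg_right hpow h2N
  have markov : ((Finset.univ.filter fun σ : ι → Bool => t ≤ h σ).card : ℝ) * Real.exp (L * t)
      ≤ ∑ σ : ι → Bool, Real.exp (L * h σ) := by
    calc ((Finset.univ.filter fun σ : ι → Bool => t ≤ h σ).card : ℝ) * Real.exp (L * t)
        = ∑ _σ ∈ Finset.univ.filter (fun σ : ι → Bool => t ≤ h σ), Real.exp (L * t) := by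
          rw [Finset.sum_const, nsmul_eq_mul]
      _ ≤ ∑ σ ∈ Finset.univ.filter (fun σ : ι → Bool => t ≤ h σ), Real.exp (L * h σ) := by
          apply Finset.sum_le_sum
          intro σ hσ
          have := (Finset.mem_filter.1 hσ).2
          exact Real.exp_le_exp.2 (by nlinarith)
      _ ≤ ∑ σ : ι → Bool, Real.exp (L * h σ) := by
          apply Finset.sum_le_sum_of_subset_of_nonneg (Finset.filter_subset _ _)
          intro σ _ _
          positivity
  have key : ((Finset.univ.filter fun σ : ι → Bool => t ≤ h σ).card : ℝ)
      ≤ Real.exp (m * L^2/8 - L * t) * 2 ^ (Fintype.card ι) := by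
    have hexp : 0 < Real.exp (L * t) := Real.exp_pos _
    rw [Real.exp_sub, div_mul_eq_mul_div, le_div_iff₀ hexp]
    calc ((Finset.univ.filter fun σ : ι → Bool => t ≤ h σ).card : ℝ) * Real.exp (L * t)
        ≤ ∑ σ : ι → Bool, Real.exp (L * h σ) := markov
      _ ≤ Real.exp (m * L^2/8) * 2 ^ (Fintype.card ι) := mgf
      _ = Real.exp (m * L^2/8) * 2 ^ (Fintype.card ι) := rfl
  have harg : m * L^2/8 - L * t = -2 * t^2 / m := by
    field_simp [hL]
    have hLm : L * m = 4 * t := by rw [hL]; exact div_mul_cancel₀ (4 * t) hm0.ne'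
    clear_value L
    linear_combination (L * m - 4 * t) * hLm
  rw [← harg]
  exact key

lemma count_dev_abs (S : Finset ι) (c : ι → Bool) (t m : ℝ) (ht : 0 < t) (hm0 : 0 < m)
    (hm : (S.card : ℝ) ≤ m) :
    ((Finset.univ.filter fun σ : ι → Bool =>
        t ≤ |(∑ i ∈ S, if σ i = c i then (1:ℝ) else 0) - S.card / 2|).card : ℝ)
      ≤ 2 * Real.exp (-2 * t^2 / m) * 2 ^ (Fintype.card ι) := by
  classical
  have hneg : ∀ σ : ι → Bool, (∑ i ∈ S, if σ i = (!(c i)) then (1:ℝ) else 0) - S.card / 2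
      = -((∑ i ∈ S, if σ i = c i then (1:ℝ) else 0) - S.card / 2) := by
    intro σ
    have : ∀ i ∈ S, (if σ i = (!(c i)) then (1:ℝ) else 0) = 1 - (if σ i = c i then (1:ℝ) else 0) := by
      intro i _
      cases h1 : σ i <;> cases h2 : c i <;> simp
    rw [Finset.sum_congr rfl this, Finset.sum_sub_distrib, Finset.sum_const, nsmul_eq_mul]
    ring
  have hsub : (Finset.univ.filter fun σ : ι → Bool =>
        t ≤ |(∑ i ∈ S, if σ i = c i then (1:ℝ) else 0) - S.card / 2|)
      ⊆ (Finset.univ.filter fun σ : ι → Bool =>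
        t ≤ (∑ i ∈ S, if σ i = c i then (1:ℝ) else 0) - S.card / 2)
      ∪ (Finset.univ.filter fun σ : ι → Bool =>
        t ≤ (∑ i ∈ S, if σ i = (!(c i)) then (1:ℝ) else 0) - S.card / 2) := by
    intro σ hσ
    have h1 := (Finset.mem_filter.1 hσ).2
    rw [Finset.mem_union, Finset.mem_filter, Finset.mem_filter]
    rcases abs_cases ((∑ i ∈ S, if σ i = c i then (1:ℝ) else 0) - S.card / 2) with ⟨he, _⟩ | ⟨he, _⟩
    · left; exact ⟨Finset.mem_univ _, he ▸ h1⟩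
    · right; refine ⟨Finset.mem_univ _, ?_⟩
      rw [hneg σ]
      linarith [he ▸ h1]
  calc ((Finset.univ.filter fun σ : ι → Bool =>
        t ≤ |(∑ i ∈ S, if σ i = c i then (1:ℝ) else 0) - S.card / 2|).card : ℝ)
      ≤ (((Finset.univ.filter fun σ : ι → Bool =>
        t ≤ (∑ i ∈ S, if σ i = c i then (1:ℝ) else 0) - S.card / 2)
      ∪ (Finset.univ.filter fun σ : ι → Bool =>
        t ≤ (∑ i ∈ S, if σ i = (!(c i)) then (1:ℝ) else 0) - S.card / 2)).card : ℝ) := by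
        exact_mod_cast Nat.cast_le.2 (Finset.card_le_card hsub)
    _ ≤ ((Finset.univ.filter fun σ : ι → Bool =>
        t ≤ (∑ i ∈ S, if σ i = c i then (1:ℝ) else 0) - S.card / 2).card : ℝ)
        + ((Finset.univ.filter fun σ : ι → Bool =>
        t ≤ (∑ i ∈ S, if σ i = (!(c i)) then (1:ℝ) else 0) - S.card / 2).card : ℝ) := by
        exact_mod_cast Nat.cast_le.2 (Finset.card_union_le _ _)
    _ ≤ Real.exp (-2 * t^2 / m) * 2 ^ (Fintype.card ι)
        + Real.exp (-2 * t^2 / m) * 2 ^ (Fintype.card ι) := by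
        apply add_le_add (count_dev_one S c t m ht hm0 hm) (count_dev_one S (fun i => !(c i)) t m ht hm0 hm)
    _ = 2 * Real.exp (-2 * t^2 / m) * 2 ^ (Fintype.card ι) := by ring


section LLL
variable {κ : Type*} [Fintype κ]

noncomputable def Cfree (B : κ → Finset (ι → Bool)) (S : Finset κ) : Finset (ι → Bool) :=
  Finset.univ.filter (fun σ => ∀ j ∈ S, σ ∉ B j)

lemma Cfree_anti (B : κ → Finset (ι → Bool)) {S₂ S : Finset κ} (h : S₂ ⊆ S) :
    Cfree B S ⊆ Cfree B S₂ := by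
  intro σ hσ
  rw [Cfree, Finset.mem_filter] at *
  exact ⟨hσ.1, fun j hj => hσ.2 j (h hj)⟩

lemma Cfree_insert (B : κ → Finset (ι → Bool)) (S : Finset κ) (j : κ) :
    Cfree B (insert j S) = Cfree B S \ B j := by
  ext σ
  simp only [Cfree, Finset.mem_filter, Finset.mem_sdiff, Finset.mem_insert, Finset.mem_univ,
    true_and]
  constructor
  · intro h
    exact ⟨fun i hi => h i (Or.inr hi), h j (Or.inl rfl)⟩
  · rintro ⟨h1, h2⟩ i (rfl | hi)
    · exact h2
    · exact h1 i hi

lemma Cfree_card_insert (B : κ → Finset (ι → Bool)) (S : Finset κ) (j : κ) :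
    ((Cfree B (insert j S)).card : ℝ)
      = ((Cfree B S).card : ℝ) - ((B j ∩ Cfree B S).card : ℝ) := by
  rw [Cfree_insert]
  have h := Finset.card_inter_add_card_sdiff (Cfree B S) (B j)
  have h2 : Cfree B S ∩ B j = B j ∩ Cfree B S := Finset.inter_comm _ _
  rw [h2] at h
  have := congrArg (Nat.cast (R := ℝ)) h
  push_cast at this
  linarith

lemma detBy_Cfree (B : κ → Finset (ι → Bool)) (vbl : κ → Finset ι)
    (hdet : ∀ k, DetBy (B k) (vbl k)) (S : Finset κ) :
    DetBy (Cfree B S) (S.biUnion vbl) := by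
  intro σ τ hagree hσ
  rw [Cfree, Finset.mem_filter] at *
  refine ⟨Finset.mem_univ _, fun j hj hτB => ?_⟩
  have : σ ∈ B j := by
    apply hdet j τ σ _ hτB
    intro i hi
    exact (hagree i (Finset.mem_biUnion.2 ⟨j, hj, hi⟩)).symm
  exact hσ.2 j hj this

theorem lll_main (B : κ → Finset (ι → Bool)) (vbl : κ → Finset ι)
    (hdet : ∀ k, DetBy (B k) (vbl k)) (D : ℕ) (hD : 1 ≤ D)
    (hΓ : ∀ k, (Finset.univ.filter (fun j => ¬ Disjoint (vbl j) (vbl k))).card ≤ D)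
    (p : ℝ) (hp0 : 0 ≤ p) (hp : ∀ k, ((B k).card : ℝ) ≤ p * 2 ^ (Fintype.card ι))
    (hcond : Real.exp 1 * p * ((D : ℝ) + 1) ≤ 1) :
    ∀ S : Finset κ, ∀ k, k ∉ S →
      ((B k ∩ Cfree B S).card : ℝ) * ((D : ℝ) + 1) ≤ ((Cfree B S).card : ℝ) := by
  have hD1 : (0:ℝ) < (D:ℝ) + 1 := by positivity
  set q : ℝ := 1 - 1/((D:ℝ)+1) with hqdef
  have hq0 : 0 < q := by
    rw [hqdef]
    have : 1/((D:ℝ)+1) < 1 := by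
      rw [div_lt_one hD1]
      have : (1:ℝ) ≤ (D:ℝ) := by exact_mod_cast hD
      linarith
    linarith
  have hq1 : q ≤ 1 := by
    rw [hqdef]
    have : 0 ≤ 1/((D:ℝ)+1) := by positivity
    linarith
  have hqD : q = (D:ℝ)/((D:ℝ)+1) := by
    rw [hqdef]
    field_simp
    ring
  have hDpos : (0:ℝ) < (D:ℝ) := by exact_mod_cast hD
  have heq : 1 ≤ Real.exp 1 * q ^ D := by
    have h2 : Real.exp (-(1/(D:ℝ))) ≤ q := by
      rw [hqD, Real.exp_neg]
      have hstep : ((D:ℝ)+1)/(D:ℝ) ≤ Real.exp (1/(D:ℝ)) := by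
        have := Real.add_one_le_exp (1/(D:ℝ))
        have heqq : ((D:ℝ)+1)/(D:ℝ) = 1/(D:ℝ) + 1 := by field_simp; ring
        linarith
      have hpos2 : (0:ℝ) < ((D:ℝ)+1)/(D:ℝ) := by positivity
      calc (Real.exp (1/(D:ℝ)))⁻¹ ≤ (((D:ℝ)+1)/(D:ℝ))⁻¹ := by
            apply inv_anti₀ hpos2 hstep
        _ = (D:ℝ)/((D:ℝ)+1) := by rw [inv_div]
    have h3 : Real.exp (-1) ≤ q ^ D := by
      have hh : Real.exp (-(1/(D:ℝ))) ^ D = Real.exp (-1) := by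
        rw [← Real.exp_nat_mul]
        congr 1
        field_simp
      rw [← hh]
      exact pow_le_pow_left₀ (Real.exp_pos _).le h2 D
    calc (1:ℝ) = Real.exp 1 * Real.exp (-1) := by rw [← Real.exp_add]; norm_num
      _ ≤ Real.exp 1 * q ^ D := mul_le_mul_of_nonneg_left h3 (Real.exp_pos _).le
  intro S
  induction S using Finset.strongInduction with
  | _ S ih =>
    intro k hk
    set S₁ : Finset κ := S.filter (fun j => ¬ Disjoint (vbl j) (vbl k)) with hS₁def
    set S₂ : Finset κ := S \ S₁ with hS₂def
    have hS₁sub : S₁ ⊆ S := Finset.filter_subset _ _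
    have hS₂sub : S₂ ⊆ S := Finset.sdiff_subset
    have hunion : S₂ ∪ S₁ = S := Finset.sdiff_union_of_subset hS₁sub
    -- subclaim
    have sub : ∀ T : Finset κ, T ⊆ S₁ →
        q ^ T.card * ((Cfree B S₂).card : ℝ) ≤ ((Cfree B (S₂ ∪ T)).card : ℝ) := by
      intro T
      induction T using Finset.cons_induction with
      | empty => intro _; simp
      | cons j T hj ihT =>
        intro hTs
        have hTsub : T ⊆ S₁ := fun x hx => hTs (Finset.mem_cons_of_mem hx)
        have hjS₁ : j ∈ S₁ := hTs (Finset.mem_cons_self _ _)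
        have hjS : j ∈ S := hS₁sub hjS₁
        have hjnot : j ∉ S₂ ∪ T := by
          rw [Finset.mem_union]
          rintro (h | h)
          · rw [hS₂def, Finset.mem_sdiff] at h
            exact h.2 hjS₁
          · exact hj h
        have hsubS : S₂ ∪ T ⊆ S := Finset.union_subset hS₂sub (hTsub.trans hS₁sub)
        have hsmall : S₂ ∪ T ⊂ S := by
          rw [Finset.ssubset_iff_of_subset hsubS]
          exact ⟨j, hjS, hjnot⟩
        have hmain := ih (S₂ ∪ T) hsmall j hjnot
        have hC := Cfree_card_insert B (S₂ ∪ T) j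
        have hrw : S₂ ∪ Finset.cons j T hj = insert j (S₂ ∪ T) := by
          ext x
          simp [Finset.mem_union, Finset.mem_insert, or_comm, or_left_comm]
        have hCnonneg : (0:ℝ) ≤ ((Cfree B (S₂ ∪ T)).card : ℝ) := Nat.cast_nonneg _
        have hstep : q * ((Cfree B (S₂ ∪ T)).card : ℝ) ≤ ((Cfree B (insert j (S₂ ∪ T))).card : ℝ) := by
          rw [Cfree_card_insert]
          have : ((B j ∩ Cfree B (S₂ ∪ T)).card : ℝ) ≤ ((Cfree B (S₂ ∪ T)).card : ℝ) / ((D:ℝ)+1) := by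
            rw [le_div_iff₀ hD1]
            exact hmain
          rw [hqdef]
          have hexp : (1 - 1/((D:ℝ)+1)) * ((Cfree B (S₂ ∪ T)).card : ℝ)
              = ((Cfree B (S₂ ∪ T)).card : ℝ) - ((Cfree B (S₂ ∪ T)).card : ℝ)/((D:ℝ)+1) := by
            ring
          rw [hexp]
          linarith
        rw [hrw, Finset.card_cons]
        calc q ^ (T.card + 1) * ((Cfree B S₂).card : ℝ)
            = q * (q ^ T.card * ((Cfree B S₂).card : ℝ)) := by ring
          _ ≤ q * ((Cfree B (S₂ ∪ T)).card : ℝ) :=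
              mul_le_mul_of_nonneg_left (ihT hTsub) hq0.le
          _ ≤ ((Cfree B (insert j (S₂ ∪ T))).card : ℝ) := hstep
    -- independence
    have hdisj : Disjoint (vbl k) (S₂.biUnion vbl) := by
      rw [Finset.disjoint_biUnion_right]
      intro j hj
      rw [hS₂def, Finset.mem_sdiff, hS₁def, Finset.mem_filter] at hj
      have : Disjoint (vbl j) (vbl k) := by
        by_contra hcon
        exact hj.2 ⟨hj.1, hcon⟩
      exact this.symm
    have hindep := detBy_indep (B k) (Cfree B S₂) (vbl k) (S₂.biUnion vbl)
      (hdet k) (detBy_Cfree B vbl hdet S₂) hdisj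
    have h2N : (0:ℝ) < 2 ^ (Fintype.card ι) := by positivity
    have hnum : ((B k ∩ Cfree B S₂).card : ℝ) ≤ p * ((Cfree B S₂).card : ℝ) := by
      have hcast : ((B k).card : ℝ) * ((Cfree B S₂).card : ℝ)
          = ((B k ∩ Cfree B S₂).card : ℝ) * 2 ^ (Fintype.card ι) := by
        exact_mod_cast congrArg (Nat.cast (R := ℝ)) hindep
      have := mul_le_mul_of_nonneg_right (hp k) (Nat.cast_nonneg (α := ℝ) (Cfree B S₂).card)
      rw [hcast] at this
      have h3 : ((B k ∩ Cfree B S₂).card : ℝ) * 2 ^ (Fintype.card ι)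
          ≤ (p * ((Cfree B S₂).card : ℝ)) * 2 ^ (Fintype.card ι) := by
        calc ((B k ∩ Cfree B S₂).card : ℝ) * 2 ^ (Fintype.card ι)
            ≤ p * 2 ^ (Fintype.card ι) * ((Cfree B S₂).card : ℝ) := this
          _ = (p * ((Cfree B S₂).card : ℝ)) * 2 ^ (Fintype.card ι) := by ring
      exact le_of_mul_le_mul_right h3 h2N
    have hmono : ((B k ∩ Cfree B S).card : ℝ) ≤ ((B k ∩ Cfree B S₂).card : ℝ) := by
      have : B k ∩ Cfree B S ⊆ B k ∩ Cfree B S₂ :=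
        Finset.inter_subset_inter (le_refl _) (Cfree_anti B hS₂sub)
      exact_mod_cast Finset.card_le_card this
    have hS₁card : S₁.card ≤ D := by
      have : S₁ ⊆ Finset.univ.filter (fun j => ¬ Disjoint (vbl j) (vbl k)) := by
        intro x hx
        rw [hS₁def, Finset.mem_filter] at hx
        exact Finset.mem_filter.2 ⟨Finset.mem_univ _, hx.2⟩
      exact le_trans (Finset.card_le_card this) (hΓ k)
    have hqmono : q ^ D ≤ q ^ S₁.card := pow_le_pow_of_le_one hq0.le hq1 hS₁card
    have hsubS₁ := sub S₁ (le_refl _)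
    rw [hunion] at hsubS₁
    -- final chain
    have hCS₂nonneg : (0:ℝ) ≤ ((Cfree B S₂).card : ℝ) := Nat.cast_nonneg _
    have hCSnonneg : (0:ℝ) ≤ ((Cfree B S).card : ℝ) := Nat.cast_nonneg _
    have hchain1 : ((Cfree B S₂).card : ℝ) ≤ Real.exp 1 * ((Cfree B S).card : ℝ) := by
      calc ((Cfree B S₂).card : ℝ) = 1 * ((Cfree B S₂).card : ℝ) := by ring
        _ ≤ (Real.exp 1 * q ^ D) * ((Cfree B S₂).card : ℝ) :=
            mul_le_mul_of_nonneg_right heq hCS₂nonneg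
        _ ≤ (Real.exp 1 * q ^ S₁.card) * ((Cfree B S₂).card : ℝ) := by
            apply mul_le_mul_of_nonneg_right _ hCS₂nonneg
            exact mul_le_mul_of_nonneg_left hqmono (Real.exp_pos _).le
        _ = Real.exp 1 * (q ^ S₁.card * ((Cfree B S₂).card : ℝ)) := by ring
        _ ≤ Real.exp 1 * ((Cfree B S).card : ℝ) :=
            mul_le_mul_of_nonneg_left hsubS₁ (Real.exp_pos _).le
    calc ((B k ∩ Cfree B S).card : ℝ) * ((D:ℝ)+1)
        ≤ (p * ((Cfree B S₂).card : ℝ)) * ((D:ℝ)+1) :=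
          mul_le_mul_of_nonneg_right (le_trans hmono hnum) hD1.le
      _ = (p * ((D:ℝ)+1)) * ((Cfree B S₂).card : ℝ) := by ring
      _ ≤ (p * ((D:ℝ)+1)) * (Real.exp 1 * ((Cfree B S).card : ℝ)) := by
          apply mul_le_mul_of_nonneg_left hchain1
          positivity
      _ = (Real.exp 1 * p * ((D:ℝ)+1)) * ((Cfree B S).card : ℝ) := by ring
      _ ≤ 1 * ((Cfree B S).card : ℝ) := mul_le_mul_of_nonneg_right hcond hCSnonneg
      _ = ((Cfree B S).card : ℝ) := by ring

theorem lll_exists (B : κ → Finset (ι → Bool)) (vbl : κ → Finset ι)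
    (hdet : ∀ k, DetBy (B k) (vbl k)) (D : ℕ) (hD : 1 ≤ D)
    (hΓ : ∀ k, (Finset.univ.filter (fun j => ¬ Disjoint (vbl j) (vbl k))).card ≤ D)
    (p : ℝ) (hp0 : 0 ≤ p) (hp : ∀ k, ((B k).card : ℝ) ≤ p * 2 ^ (Fintype.card ι))
    (hcond : Real.exp 1 * p * ((D : ℝ) + 1) ≤ 1) :
    ∃ σ : ι → Bool, ∀ k, σ ∉ B k := by
  have hD1 : (0:ℝ) < (D:ℝ) + 1 := by positivity
  have hq0 : (0:ℝ) < 1 - 1/((D:ℝ)+1) := by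
    have h1 : 1/((D:ℝ)+1) < 1 := by
      rw [div_lt_one hD1]
      have : (1:ℝ) ≤ (D:ℝ) := by exact_mod_cast hD
      linarith
    linarith
  have hpos : ∀ S : Finset κ, (0:ℝ) < ((Cfree B S).card : ℝ) := by
    intro S
    induction S using Finset.cons_induction with
    | empty =>
      have : Cfree B (∅ : Finset κ) = Finset.univ := by
        ext σ; simp [Cfree]
      rw [this]
      simp only [Finset.card_univ]
      have : 0 < Fintype.card (ι → Bool) := Fintype.card_pos
      exact_mod_cast this
    | cons j S hj ihS =>
      have hmain := lll_main B vbl hdet D hD hΓ p hp0 hp hcond S j hj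
      have hins : (Finset.cons j S hj : Finset κ) = insert j S := by
        ext x; simp
      rw [hins, Cfree_card_insert]
      have hb : ((B j ∩ Cfree B S).card : ℝ) ≤ ((Cfree B S).card : ℝ) / ((D:ℝ)+1) := by
        rw [le_div_iff₀ hD1]; exact hmain
      have : ((Cfree B S).card : ℝ) / ((D:ℝ)+1) < ((Cfree B S).card : ℝ) := by
        rw [div_lt_iff₀ hD1]
        have hge : (1:ℝ) < (D:ℝ)+1 := by
          have : (1:ℝ) ≤ (D:ℝ) := by exact_mod_cast hD
          linarith
        nlinarith
      linarith
  have := hpos Finset.univ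
  have hne : (Cfree B Finset.univ).Nonempty := by
    rw [← Finset.card_pos]
    exact_mod_cast this
  obtain ⟨σ, hσ⟩ := hne
  refine ⟨σ, fun k => ?_⟩
  rw [Cfree, Finset.mem_filter] at hσ
  exact hσ.2 k (Finset.mem_univ k)

end LLL

end ProbTools

/- ========= auxiliary development: application to regular graphs ========= -/
section ApplyTools
open Finset Real

section Apply
variable {W : Type} [Fintype W] {n : ℕ} (G : SimpleGraph W) (e : W ≃ Fin n × Bool)

/-- which side of the partition determined by `σ` the vertex `u` lies on -/
def sideOf (σ : Fin n → Bool) (u : W) : Bool := Bool.xor (σ (e u).1) ((e u).2)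

/-- number of neighbours of `v` on the same side as `v` -/
noncomputable def Xdeg (σ : Fin n → Bool) (v : W) : ℕ :=
  (Finset.univ.filter fun u => G.Adj v u ∧ sideOf e σ u = sideOf e σ v).card

variable (v : W)

noncomputable def NfV : Finset W := (G.neighborSet v).toFinset

noncomputable def pairD2 : Finset (Fin n) :=
  Finset.univ.filter (fun i => e.symm (i, true) ∈ NfV G v ∧ e.symm (i, false) ∈ NfV G v)

noncomputable def pairS1 : Finset (Fin n) :=
  Finset.univ.filter (fun i => (e.symm (i, true) ∈ NfV G v) ≠ (e.symm (i, false) ∈ NfV G v))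

noncomputable def cfun (β : Bool) (i : Fin n) : Bool :=
  Bool.xor (Bool.xor β ((e v).2)) (if e.symm (i, true) ∈ NfV G v then true else false)

lemma mem_NfV (u : W) : u ∈ NfV G v ↔ G.Adj v u := by
  rw [NfV, Set.mem_toFinset, SimpleGraph.mem_neighborSet]

lemma sum_over_pairs (F : W → ℝ) :
    ∑ u : W, F u = ∑ i : Fin n, ((F (e.symm (i, true))) + (F (e.symm (i, false)))) := by
  rw [← Equiv.sum_comp e.symm F, Fintype.sum_prod_type]
  apply Finset.sum_congr rfl
  intro i _
  rw [Fintype.sum_bool]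

lemma xdeg_card_eq (σ : Fin n → Bool) :
    (Xdeg G e σ v : ℝ)
      = ∑ u : W, (if G.Adj v u ∧ sideOf e σ u = sideOf e σ v then (1:ℝ) else 0) := by
  rw [Xdeg, Finset.card_filter]
  push_cast
  rfl

lemma xor_eq_iff (x b z : Bool) : (Bool.xor x b = z) ↔ (x = Bool.xor z b) := by
  cases x <;> cases b <;> cases z <;> decide

lemma Xdeg_decomp (σ : Fin n → Bool) :
    (Xdeg G e σ v : ℝ) = ((pairD2 G e v).card : ℝ)
      + ∑ i ∈ pairS1 G e v, (if σ i = cfun G e v (σ ((e v).1)) i then (1:ℝ) else 0) := by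
  rw [xdeg_card_eq, sum_over_pairs]
  obtain ⟨Z, hZ⟩ : ∃ z, Bool.xor (σ ((e v).1)) ((e v).2) = z := ⟨_, rfl⟩
  have hterm : ∀ i : Fin n,
      ((if G.Adj v (e.symm (i, true)) ∧ sideOf e σ (e.symm (i, true)) = sideOf e σ v then (1:ℝ) else 0)
        + (if G.Adj v (e.symm (i, false)) ∧ sideOf e σ (e.symm (i, false)) = sideOf e σ v then (1:ℝ) else 0))
      = (if i ∈ pairD2 G e v then (1:ℝ) else 0)
        + (if i ∈ pairS1 G e v then (if σ i = cfun G e v (σ ((e v).1)) i then (1:ℝ) else 0) else 0) := by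
    intro i
    have hside : ∀ b : Bool, sideOf e σ (e.symm (i, b)) = Bool.xor (σ i) b := by
      intro b
      rw [sideOf, Equiv.apply_symm_apply]
    have hsidev : sideOf e σ v = Z := hZ
    have hadj : ∀ b : Bool, G.Adj v (e.symm (i, b)) ↔ e.symm (i, b) ∈ NfV G v :=
      fun b => (mem_NfV G v _).symm
    have hcond : ∀ b : Bool, (sideOf e σ (e.symm (i, b)) = sideOf e σ v) ↔ (σ i = Bool.xor Z b) := by
      intro b
      rw [hside, hsidev]
      exact xor_eq_iff _ _ _
    by_cases h1 : e.symm (i, true) ∈ NfV G v <;> by_cases h2 : e.symm (i, false) ∈ NfV G v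
    · have hD2 : i ∈ pairD2 G e v := by rw [pairD2, Finset.mem_filter]; exact ⟨Finset.mem_univ _, h1, h2⟩
      have hS1 : i ∉ pairS1 G e v := by
        rw [pairS1, Finset.mem_filter]
        simp [h1, h2]
      rw [if_pos hD2, if_neg hS1]
      simp only [hadj, h1, h2, true_and, hcond]
      cases hz : Z <;> cases hs : σ i <;> simp
    · have hD2 : i ∉ pairD2 G e v := by rw [pairD2, Finset.mem_filter]; simp [h2]
      have hS1 : i ∈ pairS1 G e v := by rw [pairS1, Finset.mem_filter]; simp [h1, h2]
      have hcf : cfun G e v (σ ((e v).1)) i = Bool.xor Z true := by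
        rw [cfun, if_pos h1, hZ]
      rw [if_neg hD2, if_pos hS1, hcf]
      simp only [hadj, h1, h2, true_and, false_and, hcond, if_false]
      try norm_num
    · have hD2 : i ∉ pairD2 G e v := by rw [pairD2, Finset.mem_filter]; simp [h1]
      have hS1 : i ∈ pairS1 G e v := by rw [pairS1, Finset.mem_filter]; simp [h1, h2]
      have hcf : cfun G e v (σ ((e v).1)) i = Bool.xor Z false := by
        rw [cfun, if_neg h1, hZ]
      rw [if_neg hD2, if_pos hS1, hcf]
      simp only [hadj, h1, h2, true_and, false_and, hcond, if_false]
      try norm_num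
    · have hD2 : i ∉ pairD2 G e v := by rw [pairD2, Finset.mem_filter]; simp [h1]
      have hS1 : i ∉ pairS1 G e v := by rw [pairS1, Finset.mem_filter]; simp [h1, h2]
      rw [if_neg hD2, if_neg hS1]
      simp only [hadj, h1, h2, false_and, if_false]
      try norm_num
  rw [Finset.sum_congr rfl (fun i _ => hterm i), Finset.sum_add_distrib]
  congr 1
  · rw [Finset.sum_ite_mem, Finset.univ_inter, Finset.sum_const, nsmul_eq_mul, mul_one]
  · rw [Finset.sum_ite_mem, Finset.univ_inter]

lemma degree_decomp {d : ℕ} (hreg : IsReg G d) :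
    2 * (pairD2 G e v).card + (pairS1 G e v).card = d := by
  have hcard : ((NfV G v).card : ℕ) = d := by
    rw [NfV, ← Set.ncard_eq_toFinset_card']
    exact hreg v
  have hsum : ((NfV G v).card : ℝ) = ∑ u : W, (if u ∈ NfV G v then (1:ℝ) else 0) := by
    rw [Finset.sum_boole, Finset.filter_univ_mem]
  have key : ((NfV G v).card : ℝ)
      = 2 * ((pairD2 G e v).card : ℝ) + ((pairS1 G e v).card : ℝ) := by
    rw [hsum, sum_over_pairs]
    have hterm : ∀ i : Fin n,
        ((if e.symm (i, true) ∈ NfV G v then (1:ℝ) else 0)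
          + (if e.symm (i, false) ∈ NfV G v then (1:ℝ) else 0))
        = (2 * if i ∈ pairD2 G e v then (1:ℝ) else 0)
          + (if i ∈ pairS1 G e v then (1:ℝ) else 0) := by
      intro i
      by_cases h1 : e.symm (i, true) ∈ NfV G v <;> by_cases h2 : e.symm (i, false) ∈ NfV G v <;>
      · have hD2 : (i ∈ pairD2 G e v) ↔ (e.symm (i, true) ∈ NfV G v ∧ e.symm (i, false) ∈ NfV G v) := by
          rw [pairD2, Finset.mem_filter]; simp
        have hS1 : (i ∈ pairS1 G e v) ↔ ((e.symm (i, true) ∈ NfV G v) ≠ (e.symm (i, false) ∈ NfV G v)) := by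
          rw [pairS1, Finset.mem_filter]; simp
        simp [hD2, hS1, h1, h2]
        try norm_num
    rw [Finset.sum_congr rfl (fun i _ => hterm i), Finset.sum_add_distrib]
    congr 1
    · rw [← Finset.mul_sum, Finset.sum_ite_mem, Finset.univ_inter, Finset.sum_const,
        nsmul_eq_mul, mul_one]
    · rw [Finset.sum_ite_mem, Finset.univ_inter, Finset.sum_const, nsmul_eq_mul, mul_one]
  rw [hcard] at key
  exact_mod_cast key.symm

noncomputable def TT (d : ℕ) : ℝ := 2 * Real.sqrt (d * Real.log d)

lemma TT_nonneg (d : ℕ) : 0 ≤ TT d := by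
  rw [TT]; positivity

noncomputable def BadV (d : ℕ) (v : W) : Finset (Fin n → Bool) :=
  Finset.univ.filter (fun σ => ¬ (|((Xdeg G e σ v : ℝ)) - (d:ℝ)/2| ≤ TT d + 1))

lemma BadV_card {d : ℕ} (hreg : IsReg G d) (hd : 1 ≤ d) :
    ((BadV G e d v).card : ℝ) ≤ (4 / (d:ℝ)^8) * 2 ^ (Fintype.card (Fin n)) := by
  have hdec := degree_decomp G e v hreg
  have hdR : (1:ℝ) ≤ (d:ℝ) := by exact_mod_cast hd
  have hdpos : (0:ℝ) < (d:ℝ) := by linarith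
  have hm : ((pairS1 G e v).card : ℝ) ≤ (d:ℝ) := by
    have := congrArg (Nat.cast (R := ℝ)) hdec
    push_cast at this
    linarith [Nat.cast_nonneg (α := ℝ) (pairD2 G e v).card]
  have hhalf : ((pairD2 G e v).card : ℝ) + ((pairS1 G e v).card : ℝ)/2 = (d:ℝ)/2 := by
    have := congrArg (Nat.cast (R := ℝ)) hdec
    push_cast at this
    linarith
  set T : ℝ := TT d with hT
  have hT0 : 0 ≤ T := TT_nonneg d
  have ht : 0 < T + 1 := by linarith
  -- containment in the two slice events
  have hsub : BadV G e d v ⊆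
      (Finset.univ.filter fun σ : Fin n → Bool =>
        T + 1 ≤ |(∑ i ∈ pairS1 G e v, if σ i = cfun G e v true i then (1:ℝ) else 0)
          - ((pairS1 G e v).card : ℝ) / 2|)
      ∪ (Finset.univ.filter fun σ : Fin n → Bool =>
        T + 1 ≤ |(∑ i ∈ pairS1 G e v, if σ i = cfun G e v false i then (1:ℝ) else 0)
          - ((pairS1 G e v).card : ℝ) / 2|) := by
    intro σ hσ
    rw [BadV, Finset.mem_filter] at hσ
    have habs : T + 1 ≤ |((Xdeg G e σ v : ℝ)) - (d:ℝ)/2| := by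
      have := hσ.2
      by_contra hcon
      push_neg at hcon
      exact this (le_of_lt hcon)
    have hdecomp := Xdeg_decomp G e v σ
    have hkey : (∑ i ∈ pairS1 G e v, if σ i = cfun G e v (σ ((e v).1)) i then (1:ℝ) else 0)
        - ((pairS1 G e v).card : ℝ)/2 = ((Xdeg G e σ v : ℝ)) - (d:ℝ)/2 := by
      rw [hdecomp]
      linarith
    rw [Finset.mem_union]
    cases hβ : σ ((e v).1)
    · right
      rw [Finset.mem_filter]
      refine ⟨Finset.mem_univ _, ?_⟩
      rw [← hβ] at *
      rw [hkey]
      exact habs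
    · left
      rw [Finset.mem_filter]
      refine ⟨Finset.mem_univ _, ?_⟩
      rw [← hβ] at *
      rw [hkey]
      exact habs
  have hcount : ((BadV G e d v).card : ℝ)
      ≤ 4 * Real.exp (-2 * (T+1)^2 / (d:ℝ)) * 2 ^ (Fintype.card (Fin n)) := by
    calc ((BadV G e d v).card : ℝ)
        ≤ (((Finset.univ.filter fun σ : Fin n → Bool =>
            T + 1 ≤ |(∑ i ∈ pairS1 G e v, if σ i = cfun G e v true i then (1:ℝ) else 0)
              - ((pairS1 G e v).card : ℝ) / 2|)
          ∪ (Finset.univ.filter fun σ : Fin n → Bool =>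
            T + 1 ≤ |(∑ i ∈ pairS1 G e v, if σ i = cfun G e v false i then (1:ℝ) else 0)
              - ((pairS1 G e v).card : ℝ) / 2|)).card : ℝ) := by
          exact_mod_cast Finset.card_le_card hsub
      _ ≤ ((Finset.univ.filter fun σ : Fin n → Bool =>
            T + 1 ≤ |(∑ i ∈ pairS1 G e v, if σ i = cfun G e v true i then (1:ℝ) else 0)
              - ((pairS1 G e v).card : ℝ) / 2|).card : ℝ)
          + ((Finset.univ.filter fun σ : Fin n → Bool =>
            T + 1 ≤ |(∑ i ∈ pairS1 G e v, if σ i = cfun G e v false i then (1:ℝ) else 0)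
              - ((pairS1 G e v).card : ℝ) / 2|).card : ℝ) := by
          exact_mod_cast Finset.card_union_le _ _
      _ ≤ (2 * Real.exp (-2 * (T+1)^2 / (d:ℝ)) * 2 ^ (Fintype.card (Fin n)))
          + (2 * Real.exp (-2 * (T+1)^2 / (d:ℝ)) * 2 ^ (Fintype.card (Fin n))) :=
          add_le_add
            (count_dev_abs (pairS1 G e v) (cfun G e v true) (T+1) (d:ℝ) ht hdpos hm)
            (count_dev_abs (pairS1 G e v) (cfun G e v false) (T+1) (d:ℝ) ht hdpos hm)
      _ = 4 * Real.exp (-2 * (T+1)^2 / (d:ℝ)) * 2 ^ (Fintype.card (Fin n)) := by ring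
  have hlog : 0 ≤ Real.log d := Real.log_nonneg hdR
  have hTsq : T^2 = 4 * ((d:ℝ) * Real.log d) := by
    rw [hT, TT, mul_pow, Real.sq_sqrt (by positivity)]
    norm_num
  have hexple : Real.exp (-2 * (T+1)^2 / (d:ℝ)) ≤ 1/(d:ℝ)^8 := by
    have harg : -2 * (T+1)^2 / (d:ℝ) ≤ -(8 * Real.log d) := by
      rw [div_le_iff₀ hdpos]
      nlinarith
    calc Real.exp (-2 * (T+1)^2 / (d:ℝ)) ≤ Real.exp (-(8 * Real.log d)) :=
          Real.exp_le_exp.2 harg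
      _ = 1/(d:ℝ)^8 := by
          rw [Real.exp_neg]
          have h8 : (8:ℝ) * Real.log d = ((8:ℕ):ℝ) * Real.log d := by norm_num
          rw [h8, Real.exp_nat_mul, Real.exp_log hdpos]
          norm_num
  calc ((BadV G e d v).card : ℝ)
      ≤ 4 * Real.exp (-2 * (T+1)^2 / (d:ℝ)) * 2 ^ (Fintype.card (Fin n)) := hcount
    _ ≤ 4 * (1/(d:ℝ)^8) * 2 ^ (Fintype.card (Fin n)) := by
        apply mul_le_mul_of_nonneg_right _ (by positivity)
        apply mul_le_mul_of_nonneg_left hexple (by norm_num)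
    _ = (4 / (d:ℝ)^8) * 2 ^ (Fintype.card (Fin n)) := by ring

noncomputable def vblV (v : W) : Finset (Fin n) :=
  insert ((e v).1) ((NfV G v).image (fun u => (e u).1))

lemma detBy_BadV (d : ℕ) (v : W) : DetBy (BadV G e d v) (vblV G e v) := by
  intro σ τ hagree hσ
  have hv : σ ((e v).1) = τ ((e v).1) := hagree _ (Finset.mem_insert_self _ _)
  have hside : ∀ u : W, G.Adj v u → sideOf e σ u = sideOf e τ u := by
    intro u hu
    have hmem : (e u).1 ∈ vblV G e v := by
      apply Finset.mem_insert_of_mem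
      exact Finset.mem_image.2 ⟨u, (mem_NfV G v u).2 hu, rfl⟩
    rw [sideOf, sideOf, hagree _ hmem]
  have hsidev : sideOf e σ v = sideOf e τ v := by
    rw [sideOf, sideOf, hv]
  have hX : Xdeg G e σ v = Xdeg G e τ v := by
    rw [Xdeg, Xdeg]
    congr 1
    apply Finset.filter_congr
    intro u _
    constructor
    · rintro ⟨h1, h2⟩
      exact ⟨h1, by rw [← hside u h1, ← hsidev]; exact h2⟩
    · rintro ⟨h1, h2⟩
      exact ⟨h1, by rw [hside u h1, hsidev]; exact h2⟩
  rw [BadV, Finset.mem_filter] at *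
  exact ⟨Finset.mem_univ _, by rw [← hX]; exact hσ.2⟩

lemma vblV_card {d : ℕ} (hreg : IsReg G d) (v : W) : (vblV G e v).card ≤ d + 1 := by
  have h1 : (NfV G v).card = d := by
    rw [NfV, ← Set.ncard_eq_toFinset_card']
    exact hreg v
  calc (vblV G e v).card ≤ ((NfV G v).image (fun u => (e u).1)).card + 1 :=
        Finset.card_insert_le _ _
    _ ≤ (NfV G v).card + 1 := by
        have := Finset.card_image_le (s := NfV G v) (f := fun u => (e u).1)
        omega
    _ = d + 1 := by rw [h1]

lemma mem_vblV_subset {d : ℕ} (hreg : IsReg G d) (i : Fin n) :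
    (Finset.univ.filter (fun w : W => i ∈ vblV G e w))
      ⊆ insert (e.symm (i, true)) (insert (e.symm (i, false))
          (NfV G (e.symm (i, true)) ∪ NfV G (e.symm (i, false)))) := by
  intro w hw
  rw [Finset.mem_filter, vblV, Finset.mem_insert] at hw
  rcases hw.2 with h | h
  · -- i is w's own pair index
    have : w = e.symm (i, (e w).2) := by
      rw [h]
      exact (Equiv.symm_apply_apply e w).symm
    cases hb : (e w).2
    · rw [hb] at this
      rw [this]
      exact Finset.mem_insert_of_mem (Finset.mem_insert_self _ _)
    · rw [hb] at this
      rw [this]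
      exact Finset.mem_insert_self _ _
  · rw [Finset.mem_image] at h
    obtain ⟨u, hu, hui⟩ := h
    have huu : u = e.symm (i, (e u).2) := by
      rw [← hui]
      exact (Equiv.symm_apply_apply e u).symm
    have hadj : G.Adj w u := (mem_NfV G w u).1 hu
    have hwmem : w ∈ NfV G u := (mem_NfV G u w).2 hadj.symm
    apply Finset.mem_insert_of_mem
    apply Finset.mem_insert_of_mem
    rw [Finset.mem_union]
    cases hb : (e u).2
    · right
      rw [hb] at huu
      rw [← huu]
      exact hwmem
    · left
      rw [hb] at huu
      rw [← huu]
      exact hwmem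

lemma gamma_bound {d : ℕ} (hreg : IsReg G d) (v : W) :
    (Finset.univ.filter (fun w : W => ¬ Disjoint (vblV G e w) (vblV G e v))).card
      ≤ (d+1) * (2*d+2) := by
  have hsub : (Finset.univ.filter (fun w : W => ¬ Disjoint (vblV G e w) (vblV G e v)))
      ⊆ (vblV G e v).biUnion (fun i => Finset.univ.filter (fun w : W => i ∈ vblV G e w)) := by
    intro w hw
    rw [Finset.mem_filter] at hw
    obtain ⟨i, hi1, hi2⟩ := Finset.not_disjoint_iff.1 hw.2
    exact Finset.mem_biUnion.2 ⟨i, hi2, Finset.mem_filter.2 ⟨Finset.mem_univ _, hi1⟩⟩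
  have hNf : ∀ u : W, (NfV G u).card = d := by
    intro u
    rw [NfV, ← Set.ncard_eq_toFinset_card']
    exact hreg u
  have hinner : ∀ i : Fin n, (Finset.univ.filter (fun w : W => i ∈ vblV G e w)).card
      ≤ 2*d+2 := by
    intro i
    calc (Finset.univ.filter (fun w : W => i ∈ vblV G e w)).card
        ≤ (insert (e.symm (i, true)) (insert (e.symm (i, false))
            (NfV G (e.symm (i, true)) ∪ NfV G (e.symm (i, false))))).card :=
          Finset.card_le_card (mem_vblV_subset G e hreg i)
      _ ≤ (NfV G (e.symm (i, true)) ∪ NfV G (e.symm (i, false))).card + 1 + 1 := by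
          have h1 := Finset.card_insert_le (e.symm (i, false))
            (NfV G (e.symm (i, true)) ∪ NfV G (e.symm (i, false)))
          have h2 := Finset.card_insert_le (e.symm (i, true)) (insert (e.symm (i, false))
            (NfV G (e.symm (i, true)) ∪ NfV G (e.symm (i, false))))
          omega
      _ ≤ ((NfV G (e.symm (i, true))).card + (NfV G (e.symm (i, false))).card) + 1 + 1 := by
          have := Finset.card_union_le (NfV G (e.symm (i, true))) (NfV G (e.symm (i, false)))
          omega
      _ = 2*d+2 := by rw [hNf, hNf]; ring
  calc (Finset.univ.filter (fun w : W => ¬ Disjoint (vblV G e w) (vblV G e v))).card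
      ≤ ((vblV G e v).biUnion (fun i => Finset.univ.filter (fun w : W => i ∈ vblV G e w))).card :=
        Finset.card_le_card hsub
    _ ≤ ∑ i ∈ vblV G e v, (Finset.univ.filter (fun w : W => i ∈ vblV G e w)).card :=
        Finset.card_biUnion_le
    _ ≤ ∑ _i ∈ vblV G e v, (2*d+2) := Finset.sum_le_sum (fun i _ => hinner i)
    _ = (vblV G e v).card * (2*d+2) := by rw [Finset.sum_const, smul_eq_mul]
    _ ≤ (d+1) * (2*d+2) := Nat.mul_le_mul_right _ (vblV_card G e hreg v)

lemma good_sigma_exists {d : ℕ} (hreg : IsReg G d) (hd : 100 ≤ d) :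
    ∃ σ : Fin n → Bool, ∀ v : W, |((Xdeg G e σ v : ℝ)) - (d:ℝ)/2| ≤ TT d + 1 := by
  have hd1 : (1:ℕ) ≤ d := le_trans (by norm_num) hd
  have hdR : (100:ℝ) ≤ (d:ℝ) := by exact_mod_cast hd
  have hdpos : (0:ℝ) < (d:ℝ) := by linarith
  have hD1 : 1 ≤ (d+1) * (2*d+2) := by nlinarith
  have hcond : Real.exp 1 * (4 / (d:ℝ)^8) * ((((d+1) * (2*d+2) : ℕ) : ℝ) + 1) ≤ 1 := by
    have he : Real.exp 1 ≤ 3 := le_of_lt (lt_trans Real.exp_one_lt_d9 (by norm_num))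
    have he0 : 0 < Real.exp 1 := Real.exp_pos 1
    push_cast
    have h8 : (0:ℝ) < (d:ℝ)^8 := by positivity
    have heq : Real.exp 1 * (4 / (d:ℝ)^8) * ((((d:ℝ)+1) * (2*(d:ℝ)+2)) + 1)
        = (Real.exp 1 * 4 * ((((d:ℝ)+1) * (2*(d:ℝ)+2)) + 1)) / (d:ℝ)^8 := by ring
    rw [heq, div_le_one h8]
    have h6 : (100:ℝ)^6 ≤ (d:ℝ)^6 := pow_le_pow_left₀ (by norm_num) hdR 6
    nlinarith [sq_nonneg ((d:ℝ)), mul_nonneg (le_of_lt hdpos) (le_of_lt hdpos)]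
  obtain ⟨σ, hσ⟩ := lll_exists (BadV G e d) (vblV G e) (detBy_BadV G e d)
    ((d+1) * (2*d+2)) hD1 (gamma_bound G e hreg) (4 / (d:ℝ)^8) (by positivity)
    (fun v => BadV_card G e v hreg hd1) hcond
  refine ⟨σ, fun v => ?_⟩
  have := hσ v
  rw [BadV, Finset.mem_filter] at this
  push_neg at this
  exact this (Finset.mem_univ _)
lemma NfV_eq_filter (v : W) : NfV G v = Finset.univ.filter (fun u => G.Adj v u) := by
  ext u
  rw [mem_NfV, Finset.mem_filter]
  simp

lemma degN_induce_eq (U : Finset W) (x : ↥((U : Set W))) :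
    degN (G.induce (U : Set W)) x
      = (Finset.univ.filter (fun u : W => u ∈ U ∧ G.Adj ↑x u)).card := by
  rw [degN]
  rw [← Set.ncard_image_of_injective _ (Subtype.val_injective
    (p := fun u => u ∈ (U : Set W)))]
  have himg : Subtype.val '' ((G.induce (U : Set W)).neighborSet x)
      = ↑(Finset.univ.filter (fun u : W => u ∈ U ∧ G.Adj ↑x u)) := by
    ext u
    constructor
    · rintro ⟨y, hy, rfl⟩
      rw [SimpleGraph.mem_neighborSet] at hy
      have hadj : G.Adj ↑x ↑y := hy
      exact Finset.mem_coe.2 (Finset.mem_filter.2 ⟨Finset.mem_univ _, y.2, hadj⟩)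
    · intro hu
      rw [Finset.mem_coe, Finset.mem_filter] at hu
      refine ⟨⟨u, hu.2.1⟩, ?_, rfl⟩
      rw [SimpleGraph.mem_neighborSet]
      exact hu.2.2
  rw [himg, Set.ncard_coe_finset]

lemma xor_eq_true_iff (a b : Bool) : Bool.xor a b = true ↔ b = !a := by
  cases a <;> cases b <;> decide

include e in
theorem main_graph {d : ℕ} (hreg : IsReg G d) (hd : 100 ≤ d) (hn : 1 ≤ n) :
    ∃ U : Set W, U.ncard = n + 1 ∧
      (maxDeg (G.induce U) : ℝ) ≤ (d : ℝ) / 2 + 2 * Real.sqrt (d * Real.log d) + 2 := by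
  obtain ⟨σ, hσ⟩ := good_sigma_exists G e hreg hd
  have hT0 : 0 ≤ TT d := TT_nonneg d
  set i₀ : Fin n := ⟨0, hn⟩ with hi₀
  set w : W := e.symm (i₀, σ i₀) with hw
  have hsidew : sideOf e σ w = false := by
    rw [sideOf, hw, Equiv.apply_symm_apply]
    exact Bool.xor_self _
  set Afin : Finset W := Finset.univ.filter (fun u => sideOf e σ u = true) with hAfin
  have hwA : w ∉ Afin := by
    rw [hAfin, Finset.mem_filter, hsidew]
    simp
  have hAcard : Afin.card = n := by
    rw [← Fintype.card_fin n, ← Finset.card_univ]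
    apply Finset.card_bij' (i := fun u _ => (e u).1) (j := fun i _ => e.symm (i, !(σ i)))
    · intro u _; exact Finset.mem_univ _
    · intro i _
      rw [hAfin, Finset.mem_filter]
      refine ⟨Finset.mem_univ _, ?_⟩
      rw [sideOf, Equiv.apply_symm_apply]
      cases h : σ i <;> simp [h]
    · intro u hu
      rw [hAfin, Finset.mem_filter] at hu
      have hside := hu.2
      rw [sideOf] at hside
      have : (e u).2 = !(σ ((e u).1)) := (xor_eq_true_iff _ _).1 hside
      rw [← this]
      exact Equiv.symm_apply_apply e u
    · intro i _
      simp
  set Ufin : Finset W := insert w Afin with hUfin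
  have hUcard : Ufin.card = n + 1 := by
    rw [hUfin, Finset.card_insert_of_notMem hwA, hAcard]
  refine ⟨(Ufin : Set W), by rw [Set.ncard_coe_finset, hUcard], ?_⟩
  have hwU : w ∈ (Ufin : Set W) := Finset.mem_coe.2 (Finset.mem_insert_self _ _)
  have hne : (Set.range (degN (G.induce (Ufin : Set W)))).Nonempty :=
    ⟨degN (G.induce (Ufin : Set W)) ⟨w, hwU⟩, ⟨⟨w, hwU⟩, rfl⟩⟩
  have hbdd : BddAbove (Set.range (degN (G.induce (Ufin : Set W)))) :=
    (Set.finite_range _).bddAbove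
  obtain ⟨x, hxeq⟩ := Nat.sSup_mem hne hbdd
  rw [maxDeg, ← hxeq]
  rw [degN_induce_eq]
  have hXx := abs_le.1 (hσ (↑x : W))
  have hxU : (↑x : W) ∈ Ufin := Finset.mem_coe.1 x.2
  rcases Finset.mem_insert.1 hxU with hxw | hxA
  · -- x is the extra vertex w
    have hsidex : sideOf e σ (↑x : W) = false := by rw [hxw]; exact hsidew
    have hsub : Finset.univ.filter (fun u : W => u ∈ Ufin ∧ G.Adj ↑x u)
        ⊆ Finset.univ.filter (fun u : W => G.Adj ↑x u ∧ ¬(sideOf e σ u = sideOf e σ (↑x : W))) := by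
      intro u hu
      rw [Finset.mem_filter] at hu
      have huU := hu.2.1
      have hadj := hu.2.2
      rcases Finset.mem_insert.1 huU with rfl | huA
      · exact absurd hadj (by rw [hxw]; exact G.irrefl)
      · rw [hAfin, Finset.mem_filter] at huA
        refine Finset.mem_filter.2 ⟨Finset.mem_univ _, hadj, ?_⟩
        rw [huA.2, hsidex]
        simp
    have hNfx : (Finset.univ.filter (fun u : W => G.Adj ↑x u)).card = d := by
      rw [← NfV_eq_filter, NfV, ← Set.ncard_eq_toFinset_card']
      exact hreg _
    have hsplit : Xdeg G e σ ↑x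
        + (Finset.univ.filter (fun u : W => G.Adj ↑x u ∧ ¬(sideOf e σ u = sideOf e σ (↑x : W)))).card
        = d := by
      have h1 := Finset.card_filter_add_card_filter_not
        (s := Finset.univ.filter (fun u : W => G.Adj ↑x u))
        (p := fun u => sideOf e σ u = sideOf e σ (↑x : W))
      rw [Finset.filter_filter, Finset.filter_filter, hNfx] at h1
      rw [Xdeg]
      exact h1
    have hcardle : ((Finset.univ.filter (fun u : W => u ∈ Ufin ∧ G.Adj ↑x u)).card : ℝ)
        ≤ (d:ℝ) - (Xdeg G e σ ↑x : ℝ) := by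
      have h2 := Finset.card_le_card hsub
      have h3 := congrArg (Nat.cast (R := ℝ)) hsplit
      push_cast at h3 ⊢
      have h4 : ((Finset.univ.filter (fun u : W => u ∈ Ufin ∧ G.Adj ↑x u)).card : ℝ)
          ≤ ((Finset.univ.filter (fun u : W => G.Adj ↑x u ∧ ¬(sideOf e σ u = sideOf e σ (↑x : W)))).card : ℝ) := by
        exact_mod_cast h2
      linarith
    have : ((Finset.univ.filter (fun u : W => u ∈ Ufin ∧ G.Adj ↑x u)).card : ℝ)
        ≤ (d:ℝ)/2 + TT d + 1 := by linarith [hXx.1]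
    rw [TT] at this
    linarith
  · -- x is on the A side
    have hsidex : sideOf e σ (↑x : W) = true := by
      rw [hAfin, Finset.mem_filter] at hxA
      exact hxA.2
    have hsub : Finset.univ.filter (fun u : W => u ∈ Ufin ∧ G.Adj ↑x u)
        ⊆ insert w (Finset.univ.filter
          (fun u : W => G.Adj ↑x u ∧ sideOf e σ u = sideOf e σ (↑x : W))) := by
      intro u hu
      rw [Finset.mem_filter] at hu
      obtain ⟨huU, hadj⟩ := hu.2
      rcases Finset.mem_insert.1 huU with rfl | huA
      · exact Finset.mem_insert_self _ _
      · apply Finset.mem_insert_of_mem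
        rw [hAfin, Finset.mem_filter] at huA
        refine Finset.mem_filter.2 ⟨Finset.mem_univ _, hadj, ?_⟩
        rw [huA.2, hsidex]
    have hcardle : ((Finset.univ.filter (fun u : W => u ∈ Ufin ∧ G.Adj ↑x u)).card : ℝ)
        ≤ (Xdeg G e σ ↑x : ℝ) + 1 := by
      have h2 := Finset.card_le_card hsub
      have h3 := Finset.card_insert_le w (Finset.univ.filter
          (fun u : W => G.Adj ↑x u ∧ sideOf e σ u = sideOf e σ (↑x : W)))
      rw [Xdeg]
      have := le_trans h2 h3
      exact_mod_cast this
    have : ((Finset.univ.filter (fun u : W => u ∈ Ufin ∧ G.Adj ↑x u)).card : ℝ)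
        ≤ (d:ℝ)/2 + TT d + 2 := by linarith [hXx.2]
    rw [TT] at this
    linarith
end Apply

end ApplyTools

/-- there is d₀ > 0 such that every d-regular graph on 2n vertices with
d₀ ≤ d ≤ 2n-1 has a set U of n+1 vertices inducing a subgraph of maximum degree at
most d/2 + 2√(d ln d) + 2. -/
theorem stmt7 :
    ∃ d₀ : ℕ, 0 < d₀ ∧
      ∀ (V : Type) [Fintype V], ∀ (n d : ℕ) (G : SimpleGraph V),
        Fintype.card V = 2 * n → d₀ ≤ d → d ≤ 2 * n - 1 → IsReg G d →
        ∃ U : Set V, U.ncard = n + 1 ∧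
          (maxDeg (G.induce U) : ℝ) ≤ (d : ℝ) / 2 + 2 * Real.sqrt (d * Real.log d) + 2 := by
  refine ⟨100, by norm_num, ?_⟩
  intro V _ n d G hcard hd100 hdn hreg
  have hn : 1 ≤ n := by omega
  have hcards : Fintype.card V = Fintype.card (Fin n × Bool) := by
    rw [hcard, Fintype.card_prod, Fintype.card_fin, Fintype.card_bool]
    ring
  exact main_graph G (Fintype.equivOfCardEq hcards) hreg hd100 hn
end

section
/- For any positive integer k and any graph G on n vertices with minimum degree δ(G) ≥ 4k, in the Maker-Breaker game played on the edges of G (Breaker moving first, players alternately claiming previously unclaimed edges), Maker has a strategy to build a spanning subgraph of minimum degree at least k using at most kn moves. -/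
open SimpleGraph Real
open scoped Classical

variable {V : Type*}

namespace Stmt19Aux
variable [Fintype V] [DecidableEq V]

lemma hallBoxes (G : SimpleGraph V) (k : ℕ)
    (hdeg : ∀ v : V, 4 * k ≤ G.degree v) :
    ∃ f : V × Fin (2 * k) → Sym2 V, Function.Injective f ∧
      ∀ p : V × Fin (2 * k), f p ∈ G.incidenceFinset p.1 := by
  apply (Finset.all_card_le_biUnion_card_iff_exists_injective
    (fun p : V × Fin (2 * k) => G.incidenceFinset p.1)).mp
  intro s
  set S : Finset V := s.image Prod.fst with hS
  have hsub : s ⊆ S ×ˢ (Finset.univ : Finset (Fin (2 * k))) := by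
    intro p hp
    simp only [Finset.mem_product, Finset.mem_univ, and_true, hS]
    exact Finset.mem_image_of_mem _ hp
  have hcard1 : s.card ≤ S.card * (2 * k) := by
    calc s.card ≤ (S ×ˢ (Finset.univ : Finset (Fin (2 * k)))).card :=
          Finset.card_le_card hsub
      _ = S.card * (2 * k) := by
          rw [Finset.card_product, Finset.card_univ, Fintype.card_fin]
  have hbi : s.biUnion (fun p => G.incidenceFinset p.1)
      = S.biUnion (fun v => G.incidenceFinset v) := by
    ext e
    simp only [Finset.mem_biUnion, hS, Finset.mem_image]
    constructor
    · rintro ⟨p, hp, he⟩; exact ⟨p.1, ⟨p, hp, rfl⟩, he⟩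
    · rintro ⟨v, ⟨p, hp, rfl⟩, he⟩; exact ⟨p, hp, he⟩
  set U : Finset (Sym2 V) := S.biUnion (fun v => G.incidenceFinset v) with hU
  have hIU : ∀ v ∈ S, G.incidenceFinset v ⊆ U := fun v hv =>
    Finset.subset_biUnion_of_mem (fun v => G.incidenceFinset v) hv
  have hdouble : ∑ v ∈ S, (G.incidenceFinset v).card ≤ 2 * U.card := by
    have h1 : ∀ v ∈ S, (G.incidenceFinset v).card
        = (U.filter (fun e => e ∈ G.incidenceFinset v)).card := by
      intro v hv
      congr 1
      ext e
      simp only [Finset.mem_filter]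
      exact ⟨fun he => ⟨hIU v hv he, he⟩, fun h => h.2⟩
    calc ∑ v ∈ S, (G.incidenceFinset v).card
        = ∑ v ∈ S, (U.filter (fun e => e ∈ G.incidenceFinset v)).card :=
          Finset.sum_congr rfl h1
      _ = ∑ v ∈ S, ∑ e ∈ U, (if e ∈ G.incidenceFinset v then 1 else 0) :=
          Finset.sum_congr rfl (fun v _ => Finset.card_filter _ _)
      _ = ∑ e ∈ U, ∑ v ∈ S, (if e ∈ G.incidenceFinset v then 1 else 0) :=
          Finset.sum_comm
      _ = ∑ e ∈ U, (S.filter (fun v => e ∈ G.incidenceFinset v)).card :=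
          Finset.sum_congr rfl (fun e _ => (Finset.card_filter _ _).symm)
      _ ≤ ∑ e ∈ U, 2 := by
          apply Finset.sum_le_sum
          intro e _
          induction e using Sym2.ind with
          | _ a b =>
            have hsubab : S.filter (fun v => s(a,b) ∈ G.incidenceFinset v)
                ⊆ ({a, b} : Finset V) := by
              intro v hv
              have := (Finset.mem_filter.mp hv).2
              rw [mem_incidenceFinset] at this
              have hv2 : v ∈ (s(a,b) : Sym2 V) := this.2
              rw [Sym2.mem_iff] at hv2
              simp [Finset.mem_insert, hv2]
            calc (S.filter (fun v => s(a,b) ∈ G.incidenceFinset v)).card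
                ≤ ({a, b} : Finset V).card := Finset.card_le_card hsubab
              _ ≤ 2 := Finset.card_insert_le _ _ |>.trans (by simp)
      _ = 2 * U.card := by rw [Finset.sum_const, smul_eq_mul, mul_comm]
  have hlow : 4 * k * S.card ≤ ∑ v ∈ S, (G.incidenceFinset v).card := by
    calc 4 * k * S.card = ∑ _v ∈ S, 4 * k := by rw [Finset.sum_const, smul_eq_mul, mul_comm]
      _ ≤ ∑ v ∈ S, (G.incidenceFinset v).card := by
          apply Finset.sum_le_sum
          intro v _
          rw [card_incidenceFinset_eq_degree]
          exact hdeg v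
  have h2 : 2 * s.card ≤ 2 * U.card := by
    calc 2 * s.card ≤ 2 * (S.card * (2 * k)) := by omega
      _ = 4 * k * S.card := by ring
      _ ≤ ∑ v ∈ S, (G.incidenceFinset v).card := hlow
      _ ≤ 2 * U.card := hdouble
  rw [hbi]
  omega



variable (k : ℕ) (f : V × Fin (2 * k) → Sym2 V)

noncomputable def box (v : V) : Finset (Sym2 V) :=
  Finset.univ.image fun j : Fin (2 * k) => f (v, j)

noncomputable def cnt (v : V) (X : Finset (Sym2 V)) : ℕ := ((box k f v) ∩ X).card

variable {k f}

lemma card_box (hf : Function.Injective f) (v : V) : (box k f v).card = 2 * k := by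
  rw [box, Finset.card_image_of_injective _ (fun j j' h => by
    have := hf h
    exact congrArg Prod.snd this),
    Finset.card_univ, Fintype.card_fin]

lemma box_disjoint (hf : Function.Injective f) {e : Sym2 V} {v w : V}
    (hv : e ∈ box k f v) (hw : e ∈ box k f w) : v = w := by
  rw [box, Finset.mem_image] at hv hw
  obtain ⟨j, _, hj⟩ := hv
  obtain ⟨j', _, hj'⟩ := hw
  have := hf (hj.trans hj'.symm)
  exact congrArg Prod.fst this

lemma box_incidence {G : SimpleGraph V}
    (hfi : ∀ p : V × Fin (2 * k), f p ∈ G.incidenceFinset p.1)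
    {e : Sym2 V} {v : V} (hv : e ∈ box k f v) : e ∈ G.edgeSet ∧ v ∈ e := by
  rw [box, Finset.mem_image] at hv
  obtain ⟨j, _, hj⟩ := hv
  have := hfi (v, j)
  rw [mem_incidenceFinset] at this
  exact ⟨hj ▸ this.1, hj ▸ this.2⟩

lemma cnt_mono (v : V) (e : Sym2 V) (X : Finset (Sym2 V)) :
    cnt k f v X ≤ cnt k f v (insert e X) :=
  Finset.card_le_card (Finset.inter_subset_inter_left (Finset.subset_insert _ _))

lemma cnt_insert_le (v : V) (e : Sym2 V) (X : Finset (Sym2 V)) :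
    cnt k f v (insert e X) ≤ cnt k f v X + 1 := by
  have : box k f v ∩ insert e X ⊆ insert e (box k f v ∩ X) := by
    intro a ha
    rw [Finset.mem_inter, Finset.mem_insert] at ha
    rcases ha.2 with h | h
    · exact h ▸ Finset.mem_insert_self _ _
    · exact Finset.mem_insert_of_mem (Finset.mem_inter.mpr ⟨ha.1, h⟩)
  calc cnt k f v (insert e X) ≤ (insert e (box k f v ∩ X)).card := Finset.card_le_card this
    _ ≤ cnt k f v X + 1 := Finset.card_insert_le _ _

lemma cnt_insert_not_mem (v : V) {e : Sym2 V} (he : e ∉ box k f v) (X : Finset (Sym2 V)) :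
    cnt k f v (insert e X) = cnt k f v X := by
  unfold cnt
  congr 1
  ext a
  simp only [Finset.mem_inter, Finset.mem_insert]
  constructor
  · rintro ⟨h1, h2 | h2⟩
    · exact absurd (h2 ▸ h1) he
    · exact ⟨h1, h2⟩
  · rintro ⟨h1, h2⟩; exact ⟨h1, Or.inr h2⟩

lemma cnt_insert_mem (v : V) {e : Sym2 V} (he : e ∈ box k f v) {X : Finset (Sym2 V)}
    (hX : e ∉ X) : cnt k f v (insert e X) = cnt k f v X + 1 := by
  unfold cnt
  have : box k f v ∩ insert e X = insert e (box k f v ∩ X) := by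
    ext a
    simp only [Finset.mem_inter, Finset.mem_insert]
    constructor
    · rintro ⟨h1, h2 | h2⟩
      · exact Or.inl h2
      · exact Or.inr ⟨h1, h2⟩
    · rintro (rfl | ⟨h1, h2⟩)
      · exact ⟨he, Or.inl rfl⟩
      · exact ⟨h1, Or.inr h2⟩
  rw [this, Finset.card_insert_of_notMem (fun h => hX (Finset.mem_inter.mp h).2)]

lemma free_exists (hf : Function.Injective f) (v : V) {M B : Finset (Sym2 V)}
    (h : cnt k f v M + cnt k f v B < 2 * k) :
    ∃ e ∈ box k f v, e ∉ M ∧ e ∉ B := by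
  have hsub : ¬ (box k f v ⊆ M ∪ B) := by
    intro hsub
    have : box k f v ⊆ (box k f v ∩ M) ∪ (box k f v ∩ B) := by
      intro a ha
      rcases Finset.mem_union.mp (hsub ha) with h' | h'
      · exact Finset.mem_union_left _ (Finset.mem_inter.mpr ⟨ha, h'⟩)
      · exact Finset.mem_union_right _ (Finset.mem_inter.mpr ⟨ha, h'⟩)
    have hc := Finset.card_le_card this
    have := Finset.card_union_le (box k f v ∩ M) (box k f v ∩ B)
    rw [card_box hf] at hc
    unfold cnt at h
    omega
  obtain ⟨e, he, hnot⟩ := Finset.not_subset.mp hsub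
  rw [Finset.mem_union] at hnot
  push_neg at hnot
  exact ⟨e, he, hnot⟩


variable (G : SimpleGraph V) (k f)

/-- Branch 1 predicate: there is a "behind" box with a free element. -/
def br1 (s : Finset (Sym2 V) × Finset (Sym2 V)) : Prop :=
  ∃ q : Sym2 V × V, q.1 ∈ box k f q.2 ∧ cnt k f q.2 s.1 < k ∧
    cnt k f q.2 s.1 < cnt k f q.2 s.2 ∧ q.1 ∉ s.1 ∧ q.1 ∉ s.2

/-- Branch 2 predicate: there is a deficient box with a free element. -/
def br2 (s : Finset (Sym2 V) × Finset (Sym2 V)) : Prop :=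
  ∃ q : Sym2 V × V, q.1 ∈ box k f q.2 ∧ cnt k f q.2 s.1 < k ∧
    q.1 ∉ s.1 ∧ q.1 ∉ s.2

noncomputable def sig [Nonempty V] (s : Finset (Sym2 V) × Finset (Sym2 V)) : Sym2 V :=
  if h1 : br1 k f s then h1.choose.1
  else if h2 : br2 k f s then h2.choose.1
  else if h3 : ∃ e ∈ G.edgeSet, e ∉ s.1 ∧ e ∉ s.2 then h3.choose
  else s(Classical.arbitrary V, Classical.arbitrary V)

variable {G k f}

lemma sig_spec [Nonempty V] (s : Finset (Sym2 V) × Finset (Sym2 V)) :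
    (∃ v, sig k f G s ∈ box k f v ∧ cnt k f v s.1 < k ∧
      cnt k f v s.1 < cnt k f v s.2 ∧ sig k f G s ∉ s.1 ∧ sig k f G s ∉ s.2) ∨
    (¬ br1 k f s ∧ ∃ v, sig k f G s ∈ box k f v ∧ cnt k f v s.1 < k ∧
      sig k f G s ∉ s.1 ∧ sig k f G s ∉ s.2) ∨
    (¬ br1 k f s ∧ ¬ br2 k f s) := by
  unfold sig
  split_ifs with h1 h2 h3
  · left
    obtain ⟨hb, hk', hlt, hm, hbmem⟩ := h1.choose_spec
    exact ⟨h1.choose.2, hb, hk', hlt, hm, hbmem⟩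
  · right; left
    obtain ⟨hb, hk', hm, hbmem⟩ := h2.choose_spec
    exact ⟨h1, h2.choose.2, hb, hk', hm, hbmem⟩
  · right; right; exact ⟨h1, h2⟩
  · right; right; exact ⟨h1, h2⟩

lemma sig_legal [Nonempty V] (hfi : ∀ p : V × Fin (2 * k), f p ∈ G.incidenceFinset p.1) :
    LegalStrategy G (sig k f G) := by
  intro s hex
  obtain ⟨e0, he0, he1, he2⟩ := hex
  unfold sig
  split_ifs with h1 h2 h3
  · obtain ⟨hb, _, _, hm, hbmem⟩ := h1.choose_spec
    exact ⟨(box_incidence hfi hb).1, hm, hbmem⟩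
  · obtain ⟨hb, _, hm, hbmem⟩ := h2.choose_spec
    exact ⟨(box_incidence hfi hb).1, hm, hbmem⟩
  · obtain ⟨he, hm, hbm⟩ := h3.choose_spec
    exact ⟨he, hm, hbm⟩
  · exact absurd ⟨e0, he0, he1, he2⟩ h3


set_option maxHeartbeats 1000000 in
lemma invariant [Nonempty V] (hf : Function.Injective f)
    (τ : Finset (Sym2 V) × Finset (Sym2 V) → Sym2 V) (i : ℕ) :
    (∀ v, cnt k f v (playMB (sig k f G) τ i).2 ≤ cnt k f v (playMB (sig k f G) τ i).1
        ∨ k ≤ cnt k f v (playMB (sig k f G) τ i).1) ∧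
    ((∀ v, k ≤ cnt k f v (playMB (sig k f G) τ i).1)
        ∨ i ≤ ∑ v : V, min (cnt k f v (playMB (sig k f G) τ i).1) k) := by
  induction i with
  | zero =>
      constructor
      · intro v; left; simp [playMB]
      · right; simp
  | succ n ih =>
      obtain ⟨P, Q⟩ := ih
      set p := playMB (sig k f G) τ n with hp
      set M := p.1 with hM
      set B := p.2 with hB
      set B' := insert (τ p) B with hB'
      set e := sig k f G (M, B') with he
      have hstep : playMB (sig k f G) τ (n + 1) = (insert e M, B') := rfl
      rw [hstep]
      dsimp only
      have hBle : ∀ v, cnt k f v B' ≤ cnt k f v B + 1 := fun v => cnt_insert_le v _ B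
      have hBeq : ∀ v, τ p ∉ box k f v → cnt k f v B' = cnt k f v B :=
        fun v hv => cnt_insert_not_mem v hv B
      have hbehind : ∀ v, cnt k f v M < k → cnt k f v M < cnt k f v B' →
          τ p ∈ box k f v := by
        intro v h1 h2
        by_contra hnot
        rw [hBeq v hnot] at h2
        rcases P v with h | h <;> omega
      have hfree : ∀ v, cnt k f v M < k → ∃ e' ∈ box k f v, e' ∉ M ∧ e' ∉ B' := by
        intro v hv
        apply free_exists hf
        rcases P v with h | h
        · have := hBle v; omega
        · omega
      have hQbump : ∀ u, e ∈ box k f u → cnt k f u M < k → e ∉ M →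
          ((∀ v, k ≤ cnt k f v M) ∨ n ≤ ∑ v : V, min (cnt k f v M) k) →
          ((∀ v, k ≤ cnt k f v (insert e M))
            ∨ n + 1 ≤ ∑ v : V, min (cnt k f v (insert e M)) k) := by
        intro u hbu hmu heM hQ
        rcases hQ with hall | hsum
        · exact Or.inl fun v => le_trans (hall v) (cnt_mono v e M)
        · right
          have hlt : ∑ v : V, min (cnt k f v M) k < ∑ v : V, min (cnt k f v (insert e M)) k := by
            apply Finset.sum_lt_sum
            · intro v _
              have := cnt_mono (k := k) (f := f) v e M
              omega
            · refine ⟨u, Finset.mem_univ u, ?_⟩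
              have := cnt_insert_mem u hbu heM
              omega
          omega
      have hspec := sig_spec (G := G) (k := k) (f := f) (M, B')
      dsimp only at hspec
      rw [← he] at hspec
      rcases hspec with
        ⟨u, hbu, hmu, hlt, heM, heB⟩ | ⟨hnb1, u, hbu, hmu, heM, heB⟩ | ⟨hnb1, hnb2⟩
      · -- branch 1 : Maker fixes the unique behind box u
        constructor
        · intro v
          by_cases hvu : v = u
          · subst hvu
            left
            rw [cnt_insert_mem v hbu heM]
            have h1 := hBle v
            rcases P v with h | h <;> omega
          · have hne : e ∉ box k f v := fun hh => hvu (box_disjoint hf hh hbu)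
            rw [cnt_insert_not_mem v hne]
            by_cases hk1 : k ≤ cnt k f v M
            · exact Or.inr hk1
            · by_cases hb1 : cnt k f v B' ≤ cnt k f v M
              · exact Or.inl hb1
              · exfalso
                have ht1 : τ p ∈ box k f v := hbehind v (by omega) (by omega)
                have ht2 : τ p ∈ box k f u := hbehind u hmu hlt
                exact hvu (box_disjoint hf ht1 ht2)
        · exact hQbump u hbu hmu heM Q
      · -- branch 2 : no behind box, Maker plays in a deficient box
        have hgood : ∀ v, cnt k f v B' ≤ cnt k f v M ∨ k ≤ cnt k f v M := by
          intro v
          by_contra hcon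
          push_neg at hcon
          obtain ⟨e', he'b, he'M, he'B⟩ := hfree v hcon.2
          exact hnb1 ⟨(e', v), he'b, hcon.2, hcon.1, he'M, he'B⟩
        constructor
        · intro v
          rcases hgood v with h | h
          · exact Or.inl (le_trans h (cnt_mono v e M))
          · exact Or.inr (le_trans h (cnt_mono v e M))
        · exact hQbump u hbu hmu heM Q
      · -- branch 3 : all boxes are finished
        have hall : ∀ v, k ≤ cnt k f v M := by
          intro v
          by_contra hcon
          push_neg at hcon
          obtain ⟨e', he'b, he'M, he'B⟩ := hfree v hcon
          exact hnb2 ⟨(e', v), he'b, hcon, he'M, he'B⟩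
        constructor
        · intro v; exact Or.inr (le_trans (hall v) (cnt_mono v e M))
        · exact Or.inl fun v => le_trans (hall v) (cnt_mono v e M)

end Stmt19Aux


/-- in the Maker-Breaker game on the edges of a graph G on n vertices with
δ(G) ≥ 4k (Breaker moving first), Maker has a legal strategy guaranteeing that after at
most kn of his moves, his graph has minimum degree at least k, against any legal Breaker
strategy. -/
theorem stmt19 {V : Type*} [Fintype V] [DecidableEq V] (G : SimpleGraph V) (k : ℕ)
    (hk : 0 < k) (hmin : 4 * k ≤ minDeg G) :
    ∃ σ : Finset (Sym2 V) × Finset (Sym2 V) → Sym2 V, LegalStrategy G σ ∧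
      ∀ τ : Finset (Sym2 V) × Finset (Sym2 V) → Sym2 V, LegalStrategy G τ →
        ∃ i ≤ k * Fintype.card V, ∀ v : V,
          k ≤ ({w : V | s(v, w) ∈ (playMB σ τ i).1} : Set V).ncard := by
  have hne : Nonempty V := by
    by_contra h
    rw [not_nonempty_iff] at h
    have hre : Set.range (degN G) = ∅ := by
      rw [Set.range_eq_empty_iff]
      exact h
    rw [minDeg, hre, Nat.sInf_empty] at hmin
    omega
  have hdeg : ∀ v : V, 4 * k ≤ G.degree v := by
    intro v
    have h1 : minDeg G ≤ degN G v := Nat.sInf_le ⟨v, rfl⟩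
    have h2 : degN G v = G.degree v := by
      rw [degN, ← Nat.card_coe_set_eq, Nat.card_eq_fintype_card,
        G.card_neighborSet_eq_degree]
    omega
  obtain ⟨f, hf, hfi⟩ := Stmt19Aux.hallBoxes G k hdeg
  refine ⟨Stmt19Aux.sig k f G, Stmt19Aux.sig_legal hfi, ?_⟩
  intro τ hτ
  refine ⟨k * Fintype.card V, le_rfl, ?_⟩
  obtain ⟨P, Q⟩ := Stmt19Aux.invariant (G := G) hf τ (k * Fintype.card V)
  set M := (playMB (Stmt19Aux.sig k f G) τ (k * Fintype.card V)).1 with hMdef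
  have hall : ∀ v, k ≤ Stmt19Aux.cnt k f v M := by
    rcases Q with h | h
    · exact h
    · have hle : ∀ w ∈ Finset.univ, min (Stmt19Aux.cnt k f w M) k ≤ k :=
        fun w _ => min_le_right _ _
      have hsum_le : ∑ w : V, min (Stmt19Aux.cnt k f w M) k ≤ ∑ _w : V, k :=
        Finset.sum_le_sum hle
      have hconst : (∑ _w : V, k) = Fintype.card V * k := by
        rw [Finset.sum_const, smul_eq_mul, Finset.card_univ]
      have hge : (∑ _w : V, k) ≤ ∑ w : V, min (Stmt19Aux.cnt k f w M) k := by
        rw [hconst, Nat.mul_comm]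
        exact h
      have heq := le_antisymm hsum_le hge
      have hpt := (Finset.sum_eq_sum_iff_of_le hle).mp heq
      intro v
      have := hpt v (Finset.mem_univ v)
      omega
  intro v
  have hcnt := hall v
  set g : Sym2 V → V := fun e => if h : v ∈ e then Sym2.Mem.other h else v with hg
  have hkey : ∀ e ∈ Stmt19Aux.box k f v ∩ M, s(v, g e) = e := by
    intro e hemem
    have hve : v ∈ e := (Stmt19Aux.box_incidence hfi (Finset.mem_inter.mp hemem).1).2
    rw [hg]
    dsimp only
    rw [dif_pos hve]
    exact Sym2.other_spec hve
  have hinj : Set.InjOn g ↑(Stmt19Aux.box k f v ∩ M) := by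
    intro e1 h1 e2 h2 hgeq
    rw [← hkey e1 h1, ← hkey e2 h2, hgeq]
  set T := (Stmt19Aux.box k f v ∩ M).image g with hT
  have hcard : T.card = (Stmt19Aux.box k f v ∩ M).card := Finset.card_image_of_injOn hinj
  have hsub : (↑T : Set V) ⊆ {w : V | s(v, w) ∈ M} := by
    intro w hw
    simp only [hT, Finset.coe_image, Set.mem_image, Finset.mem_coe] at hw
    obtain ⟨e, hemem, rfl⟩ := hw
    have hk2 := hkey e hemem
    simp only [Set.mem_setOf_eq]
    rw [hk2]
    exact (Finset.mem_inter.mp hemem).2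
  calc k ≤ T.card := by rw [hcard]; exact hcnt
    _ = (↑T : Set V).ncard := (Set.ncard_coe_finset T).symm
    _ ≤ _ := Set.ncard_le_ncard hsub (Set.toFinite _)
end
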